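/- Let α satisfy assumptions (I)–(III) with degeneracy parameter μ. Then for every u ∈ V¹_α(x₀,ℓ) with u(ℓ) = 0 one has ∫_{x₀}^{ℓ} |u(x)|² dx ≤ C_α · ∫_{x₀}^{ℓ} α(x)|u'(x)|² dx, where C_α = max{ (ℓ − x₀)² / ((2 − μ)·α(ℓ)), 4(ℓ − x₀)^μ / α(ℓ) }. -/

import Mathlib

open MeasureTheory Set Filter Topology
open scoped ENNReal NNReal

/-- Assumptions (I)-(III) on the degenerate weight `α` on `[x₀, ℓ]`, with degeneracy
parameter `μ`: `α` is positive on `(x₀, ℓ]` and vanishes at `x₀`; `α` is continuous on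
`[x₀, ℓ]` and `C¹` on `(x₀, ℓ]` with derivative `α'`; and
`μ = sup_{x₀ < x ≤ ℓ} (x - x₀)|α'(x)|/α(x) = lim_{x → x₀⁺} (x - x₀)|α'(x)|/α(x) < 2`. -/
def DegWeight (x₀ ℓ μ : ℝ) (α α' : ℝ → ℝ) : Prop :=
  (∀ x ∈ Ioc x₀ ℓ, 0 < α x) ∧ α x₀ = 0 ∧
  ContinuousOn α (Icc x₀ ℓ) ∧
  (∀ x ∈ Ioc x₀ ℓ, HasDerivWithinAt α (α' x) (Ioc x₀ ℓ) x) ∧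
  ContinuousOn α' (Ioc x₀ ℓ) ∧
  IsLUB ((fun x => (x - x₀) * |α' x| / α x) '' Ioc x₀ ℓ) μ ∧
  Tendsto (fun x => (x - x₀) * |α' x| / α x) (𝓝[>] x₀) (𝓝 μ) ∧
  μ < 2

/-- `u ∈ V¹_α(x₀, ℓ)` (real-valued): `u ∈ L²(x₀, ℓ)`, `u` is locally absolutely continuous
on `(x₀, ℓ]` with a.e. derivative `u'` (expressed via the fundamental theorem of calculus on
compact subintervals of `(x₀, ℓ]`), and `√α · u' ∈ L²(x₀, ℓ)`. -/
def MemV1 (x₀ ℓ : ℝ) (α u u' : ℝ → ℝ) : Prop :=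
  MemLp u 2 (volume.restrict (Ioo x₀ ℓ)) ∧
  (∀ x y : ℝ, x₀ < x → x ≤ y → y ≤ ℓ →
    IntervalIntegrable u' volume x y ∧ u y - u x = ∫ t in x..y, u' t) ∧
  MemLp (fun x => Real.sqrt (α x) * u' x) 2 (volume.restrict (Ioo x₀ ℓ))

lemma wpz_meas_rpow (r : ℝ) : Measurable fun x : ℝ => x ^ r :=
  measurable_of_continuousOn_compl_singleton 0 (fun x hx =>
    (Real.continuousAt_rpow_const x r (Or.inl hx)).continuousWithinAt)

lemma wpz_half_pow (a : ℝ≥0∞) : (a ^ ((1:ℝ)/2)) ^ (2:ℕ) = a := by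
  rw [← ENNReal.rpow_natCast, ← ENNReal.rpow_mul]; norm_num

lemma wpz_alpha_lb (x₀ ℓ μ : ℝ) (α α' : ℝ → ℝ) (h : DegWeight x₀ ℓ μ α α') :
    ∀ t ∈ Ioc x₀ ℓ, α ℓ * (ℓ - x₀) ^ (-μ) * (t - x₀) ^ μ ≤ α t := by
  obtain ⟨hpos, hα0, hcont, hderiv, hcont', hlub, _, hμ2⟩ := h
  have key : ∀ s ∈ Ioc x₀ ℓ, |α' s| * (s - x₀) ≤ μ * α s := by
    intro s hs
    have h1 : (s - x₀) * |α' s| / α s ≤ μ := hlub.1 ⟨s, hs, rfl⟩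
    have h2 : 0 < α s := hpos s hs
    rw [div_le_iff₀ h2] at h1
    nlinarith
  intro t ht
  set hfun : ℝ → ℝ := fun s => α s * (s - x₀) ^ (-μ) with hfdef
  have hanti : AntitoneOn hfun (Icc t ℓ) := by
    apply antitoneOn_of_deriv_nonpos (convex_Icc t ℓ)
    · intro s hs
      have hs0 : x₀ < s := lt_of_lt_of_le ht.1 hs.1
      refine ContinuousWithinAt.mul ?_ ?_
      · exact (hcont.mono (fun y (hy : y ∈ Icc t ℓ) =>
          ⟨(lt_of_lt_of_le ht.1 hy.1).le, hy.2⟩)) s hs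
      · refine ContinuousAt.continuousWithinAt ?_
        have hc1 : ContinuousAt (fun z : ℝ => z - x₀) s :=
          (continuous_id.sub continuous_const).continuousAt
        exact ContinuousAt.comp (f := fun z : ℝ => z - x₀) (g := fun z : ℝ => z ^ (-μ))
          (Real.continuousAt_rpow_const _ _ (Or.inl (sub_ne_zero.2 hs0.ne'))) hc1
    all_goals {
      rw [interior_Icc]
      intro s hs
      have hs0 : x₀ < s := lt_of_lt_of_le ht.1 hs.1.le
      have hsp : (0:ℝ) < s - x₀ := sub_pos.2 hs0
      have hsIoc : s ∈ Ioc x₀ ℓ := ⟨hs0, hs.2.le⟩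
      have hαs : HasDerivAt α (α' s) s := by
        refine (hderiv s hsIoc).hasDerivAt ?_
        exact Filter.mem_of_superset (Ioo_mem_nhds hs0 hs.2) Ioo_subset_Ioc_self
      have hr : HasDerivAt (fun z : ℝ => (z - x₀) ^ (-μ)) (-μ * (s - x₀) ^ (-μ - 1)) s := by
        have h1 := Real.hasDerivAt_rpow_const (x := s - x₀) (p := -μ) (Or.inl hsp.ne')
        have h2 : HasDerivAt (fun z : ℝ => z - x₀) 1 s := (hasDerivAt_id s).sub_const x₀
        simpa [Function.comp_def] using h1.comp s h2
      have hprod := hαs.mul hr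
      first
      | exact hprod.differentiableAt.differentiableWithinAt
      | { rw [show deriv hfun s = deriv (α * fun z => (z - x₀) ^ (-μ)) s from rfl, hprod.deriv]
          have e1 : (s - x₀) ^ (-μ) = (s - x₀) ^ (-μ - 1) * (s - x₀) := by
            rw [← Real.rpow_add_one hsp.ne']
            ring_nf
          have h3 : α' s * (s - x₀) ≤ μ * α s := by
            have := key s hsIoc
            have := le_abs_self (α' s)
            nlinarith [abs_nonneg (α' s)]
          have h4 : (0:ℝ) ≤ (s - x₀) ^ (-μ - 1) := Real.rpow_nonneg hsp.le _
          calc α' s * (s - x₀) ^ (-μ) + α s * (-μ * (s - x₀) ^ (-μ - 1))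
              = (α' s * (s - x₀) - μ * α s) * (s - x₀) ^ (-μ - 1) := by rw [e1]; ring
            _ ≤ 0 := mul_nonpos_of_nonpos_of_nonneg (by linarith) h4 }
    }
  have h5 : hfun ℓ ≤ hfun t := hanti ⟨le_rfl, ht.2⟩ ⟨ht.2, le_rfl⟩ ht.2
  have htp : (0:ℝ) < t - x₀ := sub_pos.2 ht.1
  have h6 : (t - x₀) ^ (-μ) * (t - x₀) ^ μ = 1 := by
    rw [← Real.rpow_add htp]; simp
  have h7 : (0:ℝ) ≤ (t - x₀) ^ μ := Real.rpow_nonneg htp.le _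
  calc α ℓ * (ℓ - x₀) ^ (-μ) * (t - x₀) ^ μ = hfun ℓ * (t - x₀) ^ μ := rfl
    _ ≤ hfun t * (t - x₀) ^ μ := mul_le_mul_of_nonneg_right h5 h7
    _ = α t * ((t - x₀) ^ (-μ) * (t - x₀) ^ μ) := by ring
    _ = α t := by rw [h6, mul_one]


set_option maxHeartbeats 1000000 in
/-- If `α` satisfies (I)-(III) with degeneracy parameter `μ`, then every
`u ∈ V¹_α(x₀, ℓ)` with `u(ℓ) = 0` satisfies
`∫_{x₀}^{ℓ} |u(x)|² dx ≤ C_α · ∫_{x₀}^{ℓ} α(x)|u'(x)|² dx`, where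
`C_α = max{(ℓ - x₀)²/((2 - μ)α(ℓ)), 4(ℓ - x₀)^μ/α(ℓ)}`. -/
theorem weighted_poincare_zero (x₀ ℓ μ : ℝ) (α α' : ℝ → ℝ) (hxl : x₀ < ℓ)
    (h : DegWeight x₀ ℓ μ α α') (u u' : ℝ → ℝ) (hu : MemV1 x₀ ℓ α u u')
    (huℓ : u ℓ = 0) :
    ∫ x in Ioo x₀ ℓ, (u x) ^ 2 ≤
      max ((ℓ - x₀) ^ 2 / ((2 - μ) * α ℓ)) (4 * (ℓ - x₀) ^ μ / α ℓ) *
        ∫ x in Ioo x₀ ℓ, α x * (u' x) ^ 2 := by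
  have hlow := wpz_alpha_lb x₀ ℓ μ α α' h
  obtain ⟨hpos, hα0, hcont, hderiv, hcont', hlub, htend, hμ2⟩ := h
  obtain ⟨huL2, hFTC, hwL2⟩ := hu
  have hαℓ : 0 < α ℓ := hpos ℓ ⟨hxl, le_rfl⟩
  have hℓ0 : (0:ℝ) < ℓ - x₀ := sub_pos.2 hxl
  have hμ0 : 0 ≤ μ :=
    le_trans (div_nonneg (mul_nonneg hℓ0.le (abs_nonneg _)) hαℓ.le)
      (hlub.1 ⟨ℓ, ⟨hxl, le_rfl⟩, rfl⟩)
  have h2μ : (0:ℝ) < 2 - μ := by linarith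
  set S := Ioo x₀ ℓ with hS
  set K := (ℓ - x₀) ^ μ / α ℓ with hK
  have hK0 : (0:ℝ) ≤ K := by positivity
  set C := (ℓ - x₀) ^ 2 / ((2 - μ) * α ℓ) with hC
  have hC0 : (0:ℝ) ≤ C := by positivity
  -- pointwise upper bound on 1/α
  have hinv : ∀ t ∈ Ioc x₀ ℓ, 1 / α t ≤ K * (t - x₀) ^ (-μ) := by
    intro t ht
    have h2 := hlow t ht
    have hαt := hpos t ht
    have htp : (0:ℝ) < t - x₀ := sub_pos.2 ht.1
    have hb : (0:ℝ) < α ℓ * (ℓ - x₀) ^ (-μ) * (t - x₀) ^ μ := by positivity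
    calc 1 / α t ≤ 1 / (α ℓ * (ℓ - x₀) ^ (-μ) * (t - x₀) ^ μ) :=
          one_div_le_one_div_of_le hb h2
      _ = K * (t - x₀) ^ (-μ) := by
          rw [hK, Real.rpow_neg hℓ0.le, Real.rpow_neg htp.le]
          have h1 : (ℓ - x₀) ^ μ ≠ 0 := by positivity
          have h2' : (t - x₀) ^ μ ≠ 0 := by positivity
          field_simp
  -- measurability
  have hαmeas : AEMeasurable α (volume.restrict S) :=
    (hcont.mono Ioo_subset_Icc_self).aemeasurable measurableSet_Ioo
  have hwmeas : AEMeasurable (fun t => Real.sqrt (α t) * u' t) (volume.restrict S) :=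
    hwL2.aestronglyMeasurable.aemeasurable
  set g : ℝ → ℝ≥0∞ := fun t => ENNReal.ofReal (K * (t - x₀) ^ (-μ)) with hg
  have hgmeas : Measurable g :=
    ENNReal.measurable_ofReal.comp
      (((wpz_meas_rpow (-μ)).comp (measurable_id.sub_const x₀)).const_mul K)
  set Hfun : ℝ → ℝ≥0∞ := fun x => ∫⁻ t in Ioo x ℓ, g t with hH
  have hHanti : Antitone Hfun := fun x₁ x₂ h12 =>
    lintegral_mono_set (Ioo_subset_Ioo h12 le_rfl)
  have hHmeas : Measurable Hfun := hHanti.measurable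
  set IE := ∫⁻ t in S, ENNReal.ofReal (α t * u' t ^ 2) with hIE
  -- integrability of α u'²
  have hIw : Integrable (fun t => α t * u' t ^ 2) (volume.restrict S) := by
    refine hwL2.integrable_sq.congr ?_
    refine (ae_restrict_iff' measurableSet_Ioo).2 (ae_of_all _ fun t ht => ?_)
    have hαt : (0:ℝ) ≤ α t := (hpos t ⟨ht.1, ht.2.le⟩).le
    simp only [mul_pow, Real.sq_sqrt hαt]
  have hnn : 0 ≤ᵐ[volume.restrict S] fun t => α t * u' t ^ 2 :=
    (ae_restrict_iff' measurableSet_Ioo).2 (ae_of_all _ fun t ht =>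
      mul_nonneg (hpos t ⟨ht.1, ht.2.le⟩).le (sq_nonneg _))
  have hIEeq : IE = ENNReal.ofReal (∫ t in S, α t * u' t ^ 2) :=
    (ofReal_integral_eq_lintegral_ofReal hIw hnn).symm
  have hIEne : IE ≠ ⊤ := by rw [hIEeq]; exact ENNReal.ofReal_ne_top
  have hI0 : 0 ≤ ∫ t in S, α t * u' t ^ 2 := integral_nonneg_of_ae hnn
  -- Step A : pointwise bound
  have stepA : ∀ x ∈ S, ENNReal.ofReal (u x ^ 2) ≤ Hfun x * IE := by
    intro x hx
    have hx0 : x₀ < x := hx.1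
    have hxℓ : x < ℓ := hx.2
    obtain ⟨hint, hFT⟩ := hFTC x ℓ hx0 hxℓ.le le_rfl
    have hux : u x = -∫ t in x..ℓ, u' t := by rw [huℓ] at hFT; linarith
    have hintOn : IntegrableOn u' (Ioo x ℓ) volume :=
      (intervalIntegrable_iff_integrableOn_Ioo_of_le hxℓ.le).1 hint
    have habs : |u x| ≤ ∫ t in Ioo x ℓ, |u' t| := by
      rw [hux, abs_neg]
      refine le_trans (intervalIntegral.abs_integral_le_integral_abs hxℓ.le) ?_
      rw [intervalIntegral.integral_of_le hxℓ.le, integral_Ioc_eq_integral_Ioo]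
    have h1 : ENNReal.ofReal |u x| ≤ ∫⁻ t in Ioo x ℓ, ENNReal.ofReal |u' t| := by
      calc ENNReal.ofReal |u x| ≤ ENNReal.ofReal (∫ t in Ioo x ℓ, |u' t|) :=
            ENNReal.ofReal_le_ofReal habs
        _ = _ := ofReal_integral_eq_lintegral_ofReal hintOn.abs
            (ae_of_all _ fun t => abs_nonneg _)
    have hsub : Ioo x ℓ ⊆ S := fun t ht => ⟨hx0.trans ht.1, ht.2⟩
    have hle : volume.restrict (Ioo x ℓ) ≤ volume.restrict S :=
      Measure.restrict_mono hsub le_rfl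
    set f1 : ℝ → ℝ≥0∞ := fun t => ENNReal.ofReal (Real.sqrt (α t))⁻¹ with hf1
    set g1 : ℝ → ℝ≥0∞ := fun t => ENNReal.ofReal |Real.sqrt (α t) * u' t| with hg1
    have hf1m : AEMeasurable f1 (volume.restrict (Ioo x ℓ)) :=
      ((ENNReal.measurable_ofReal.comp Real.continuous_sqrt.measurable.inv)).comp_aemeasurable
        (hαmeas.mono_measure hle)
    have hg1m : AEMeasurable g1 (volume.restrict (Ioo x ℓ)) :=
      (ENNReal.measurable_ofReal.comp continuous_abs.measurable).comp_aemeasurable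
        (hwmeas.mono_measure hle)
    have hcongr1 : ∀ t ∈ Ioo x ℓ, ENNReal.ofReal |u' t| = f1 t * g1 t := by
      intro t ht
      have hαt : 0 < α t := hpos t ⟨hx0.trans ht.1, ht.2.le⟩
      have hst : 0 < Real.sqrt (α t) := Real.sqrt_pos.2 hαt
      rw [← ENNReal.ofReal_mul (by positivity)]
      congr 1
      rw [abs_mul, abs_of_nonneg (Real.sqrt_nonneg _)]
      field_simp
    have hholder : ∫⁻ t in Ioo x ℓ, ENNReal.ofReal |u' t| ≤
        (∫⁻ t in Ioo x ℓ, f1 t ^ (2:ℝ)) ^ ((1:ℝ)/2) *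
          (∫⁻ t in Ioo x ℓ, g1 t ^ (2:ℝ)) ^ ((1:ℝ)/2) := by
      rw [setLIntegral_congr_fun measurableSet_Ioo hcongr1]
      simpa using ENNReal.lintegral_mul_le_Lp_mul_Lq (volume.restrict (Ioo x ℓ))
        (Real.HolderConjugate.two_two : Real.HolderConjugate 2 2) hf1m hg1m
    have hf2 : ∫⁻ t in Ioo x ℓ, f1 t ^ (2:ℝ) ≤ Hfun x := by
      refine lintegral_mono_ae ((ae_restrict_iff' measurableSet_Ioo).2
        (ae_of_all _ fun t ht => ?_))
      have hαt : 0 < α t := hpos t ⟨hx0.trans ht.1, ht.2.le⟩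
      calc f1 t ^ (2:ℝ) = f1 t ^ (2:ℕ) := by
            rw [← ENNReal.rpow_natCast]; norm_num
        _ = ENNReal.ofReal ((Real.sqrt (α t))⁻¹ * (Real.sqrt (α t))⁻¹) := by
            rw [pow_two, ← ENNReal.ofReal_mul (by positivity)]
        _ = ENNReal.ofReal (1 / α t) := by
            congr 1
            rw [← mul_inv, Real.mul_self_sqrt hαt.le, one_div]
        _ ≤ g t := ENNReal.ofReal_le_ofReal (hinv t ⟨hx0.trans ht.1, ht.2.le⟩)
    have hg2 : ∫⁻ t in Ioo x ℓ, g1 t ^ (2:ℝ) ≤ IE := by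
      have e1 : ∫⁻ t in Ioo x ℓ, g1 t ^ (2:ℝ)
          = ∫⁻ t in Ioo x ℓ, ENNReal.ofReal (α t * u' t ^ 2) := by
        refine setLIntegral_congr_fun measurableSet_Ioo (fun t ht => ?_)
        have hαt : (0:ℝ) ≤ α t := (hpos t ⟨hx0.trans ht.1, ht.2.le⟩).le
        calc g1 t ^ (2:ℝ) = g1 t ^ (2:ℕ) := by
              rw [← ENNReal.rpow_natCast]; norm_num
          _ = ENNReal.ofReal (|Real.sqrt (α t) * u' t| * |Real.sqrt (α t) * u' t|) := by
              rw [pow_two, ← ENNReal.ofReal_mul (abs_nonneg _)]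
          _ = ENNReal.ofReal (α t * u' t ^ 2) := by
              rw [abs_mul_abs_self]
              congr 1
              rw [mul_mul_mul_comm, Real.mul_self_sqrt hαt, ← pow_two]
      rw [e1]
      exact lintegral_mono_set hsub
    calc ENNReal.ofReal (u x ^ 2) = ENNReal.ofReal |u x| ^ (2:ℕ) := by
          rw [← ENNReal.ofReal_pow (abs_nonneg _), sq_abs]
      _ ≤ (∫⁻ t in Ioo x ℓ, ENNReal.ofReal |u' t|) ^ (2:ℕ) := pow_le_pow_left' h1 2
      _ ≤ ((∫⁻ t in Ioo x ℓ, f1 t ^ (2:ℝ)) ^ ((1:ℝ)/2) *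
            (∫⁻ t in Ioo x ℓ, g1 t ^ (2:ℝ)) ^ ((1:ℝ)/2)) ^ (2:ℕ) := pow_le_pow_left' hholder 2
      _ = (∫⁻ t in Ioo x ℓ, f1 t ^ (2:ℝ)) * (∫⁻ t in Ioo x ℓ, g1 t ^ (2:ℝ)) := by
          rw [mul_pow, wpz_half_pow, wpz_half_pow]
      _ ≤ Hfun x * IE := mul_le_mul' hf2 hg2
  -- Step C : Fubini computation
  have stepC : ∫⁻ x in S, Hfun x = ENNReal.ofReal C := by
    have hinner : ∀ x ∈ S, Hfun x = ∫⁻ t in S, (Ioi x).indicator g t := by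
      intro x hx
      have hset : Ioi x ∩ S = Ioo x ℓ := by
        rw [hS, inter_comm, Ioo_inter_Ioi, max_eq_right hx.1.le]
      rw [setLIntegral_indicator measurableSet_Ioi, hset]
    have hswap : ∫⁻ x in S, ∫⁻ t in S, (Ioi x).indicator g t
        = ∫⁻ t in S, ∫⁻ x in S, (Ioi x).indicator g t := by
      apply lintegral_lintegral_swap
      apply Measurable.aemeasurable
      have e : (Function.uncurry fun x t => (Ioi x).indicator g t)
          = fun p : ℝ × ℝ => ({q : ℝ × ℝ | q.1 < q.2}.indicator (fun q => g q.2)) p := by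
        funext p
        simp [Function.uncurry, Set.indicator, Set.mem_Ioi, Set.mem_setOf_eq]
      rw [e]
      exact (hgmeas.comp measurable_snd).indicator
        (measurableSet_lt measurable_fst measurable_snd)
    have hx_inner : ∀ t ∈ S, (∫⁻ x in S, (Ioi x).indicator g t)
        = g t * ENNReal.ofReal (t - x₀) := by
      intro t ht
      have e2 : ∀ x : ℝ, (Ioi x).indicator g t = (Iio t).indicator (fun _ => g t) x := by
        intro x; simp [Set.indicator, Set.mem_Ioi, Set.mem_Iio]
      simp_rw [e2]
      rw [setLIntegral_indicator measurableSet_Iio]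
      rw [show Iio t ∩ S = Ioo x₀ t from by
        rw [hS, inter_comm, Ioo_inter_Iio, min_eq_right ht.2.le]]
      rw [setLIntegral_const, Real.volume_Ioo]
    have hval : ∫ t in S, K * (t - x₀) ^ (1 - μ) = C := by
      have e1 : ∫ t in S, K * (t - x₀) ^ (1 - μ) = K * ∫ t in S, (t - x₀) ^ (1 - μ) :=
        integral_const_mul K _
      have e2 : ∫ t in S, (t - x₀) ^ (1 - μ) = (ℓ - x₀) ^ (2 - μ) / (2 - μ) := by
        rw [hS, ← integral_Ioc_eq_integral_Ioo, ← intervalIntegral.integral_of_le hxl.le,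
          intervalIntegral.integral_comp_sub_right (fun s => s ^ (1 - μ)) x₀, sub_self,
          integral_rpow (Or.inl (by linarith : (-1:ℝ) < 1 - μ)),
          Real.zero_rpow (by linarith : (1:ℝ) - μ + 1 ≠ 0),
          show (1:ℝ) - μ + 1 = 2 - μ by ring]
        ring
      rw [e1, e2, hK, hC, div_mul_div_comm,
        show (ℓ - x₀) ^ μ * (ℓ - x₀) ^ (2 - μ) = (ℓ - x₀) ^ (2:ℕ) from by
          rw [← Real.rpow_natCast (ℓ - x₀) 2, ← Real.rpow_add hℓ0]; norm_num,
        mul_comm (α ℓ) (2 - μ)]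
    have hint2 : IntegrableOn (fun t => K * (t - x₀) ^ (1 - μ)) S volume := by
      have h1 : IntervalIntegrable (fun s : ℝ => s ^ (1 - μ)) volume 0 (ℓ - x₀) :=
        intervalIntegral.intervalIntegrable_rpow' (by linarith)
      have h2 := (h1.comp_sub_right x₀).const_mul K
      rw [zero_add, sub_add_cancel] at h2
      exact (intervalIntegrable_iff_integrableOn_Ioo_of_le hxl.le).1 h2
    have hnn2 : 0 ≤ᵐ[volume.restrict S] fun t => K * (t - x₀) ^ (1 - μ) :=
      (ae_restrict_iff' measurableSet_Ioo).2 (ae_of_all _ fun t ht =>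
        mul_nonneg hK0 (Real.rpow_nonneg (by linarith [ht.1]) _))
    calc ∫⁻ x in S, Hfun x = ∫⁻ x in S, ∫⁻ t in S, (Ioi x).indicator g t :=
          setLIntegral_congr_fun measurableSet_Ioo hinner
      _ = ∫⁻ t in S, ∫⁻ x in S, (Ioi x).indicator g t := hswap
      _ = ∫⁻ t in S, g t * ENNReal.ofReal (t - x₀) :=
          setLIntegral_congr_fun measurableSet_Ioo hx_inner
      _ = ∫⁻ t in S, ENNReal.ofReal (K * (t - x₀) ^ (1 - μ)) := by
          refine setLIntegral_congr_fun measurableSet_Ioo (fun t ht => ?_)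
          have htp : (0:ℝ) < t - x₀ := sub_pos.2 ht.1
          rw [hg, ← ENNReal.ofReal_mul (by positivity)]
          congr 1
          rw [mul_assoc]
          congr 1
          rw [show (1:ℝ) - μ = -μ + 1 by ring, Real.rpow_add_one htp.ne' (-μ)]
      _ = ENNReal.ofReal (∫ t in S, K * (t - x₀) ^ (1 - μ)) :=
          (ofReal_integral_eq_lintegral_ofReal hint2 hnn2).symm
      _ = ENNReal.ofReal C := by rw [hval]
  -- Combine
  have main : ∫⁻ x in S, ENNReal.ofReal (u x ^ 2) ≤ ENNReal.ofReal C * IE := by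
    calc ∫⁻ x in S, ENNReal.ofReal (u x ^ 2) ≤ ∫⁻ x in S, Hfun x * IE :=
          lintegral_mono_ae ((ae_restrict_iff' measurableSet_Ioo).2 (ae_of_all _ stepA))
      _ = (∫⁻ x in S, Hfun x) * IE := lintegral_mul_const IE hHmeas
      _ = ENNReal.ofReal C * IE := by rw [stepC]
  have hIu : Integrable (fun x => u x ^ 2) (volume.restrict S) := huL2.integrable_sq
  have hunn : 0 ≤ᵐ[volume.restrict S] fun x => u x ^ 2 := ae_of_all _ fun x => sq_nonneg _
  have hLHS : ENNReal.ofReal (∫ x in S, u x ^ 2) = ∫⁻ x in S, ENNReal.ofReal (u x ^ 2) :=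
    ofReal_integral_eq_lintegral_ofReal hIu hunn
  have hfin : ENNReal.ofReal C * IE ≠ ⊤ := ENNReal.mul_ne_top ENNReal.ofReal_ne_top hIEne
  have h9 : ∫ x in S, u x ^ 2 ≤ C * ∫ t in S, α t * u' t ^ 2 := by
    have h10 := ENNReal.toReal_mono hfin (hLHS ▸ main)
    rw [ENNReal.toReal_ofReal (integral_nonneg_of_ae hunn), ENNReal.toReal_mul,
      ENNReal.toReal_ofReal hC0, hIEeq, ENNReal.toReal_ofReal hI0] at h10
    exact h10
  refine h9.trans (mul_le_mul_of_nonneg_right ?_ hI0)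
  exact le_max_left _ _
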